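/- In a Clifford algebra with n ≤ 3 generators and nondegenerate form, every invertible element T satisfies involute(reverse(T))·T ∈ Z^×, i.e. the group B equals all of C^×. -/

import Mathlib

open CliffordAlgebra

noncomputable section

variable {n : ℕ} (Q : QuadraticForm ℝ (Fin n → ℝ))

/-- The standard generators `e_a` of the Clifford algebra. -/
def egen (a : Fin n) : CliffordAlgebra Q := ι Q (Pi.single a 1)

/-- The ordered product of generators indexed by a finite set. -/
def eProd (s : Finset (Fin n)) : CliffordAlgebra Q :=
  ((s.sort (· ≤ ·)).map (egen Q)).prod

/-- The grade-`k` subspace `C^k`, spanned by the products of `k` distinct generators. -/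
def gradeSubmodule (k : ℕ) : Submodule ℝ (CliffordAlgebra Q) :=
  Submodule.span ℝ {x | ∃ s : Finset (Fin n), s.card = k ∧ x = eProd Q s}

/-- The set `Z^× (C^{×(0)} ∪ C^{×(1)})` : invertible central elements times
invertible even or odd elements. -/
def Pset : Set (CliffordAlgebra Q) :=
  {T | ∃ W T₀ : CliffordAlgebra Q,
    W ∈ Subalgebra.center ℝ (CliffordAlgebra Q) ∧ IsUnit W ∧
    (T₀ ∈ evenOdd Q 0 ∨ T₀ ∈ evenOdd Q 1) ∧ IsUnit T₀ ∧ T = W * T₀}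

/-- `Q` is diagonal with entries `±1` in the standard basis (an orthonormal-type basis,
expressing nondegeneracy of `Q`). -/
def DiagQ : Prop :=
  (∀ a, Q (Pi.single a 1) = 1 ∨ Q (Pi.single a 1) = -1) ∧
  (∀ a b : Fin n, a ≠ b → QuadraticMap.polar Q (Pi.single a 1) (Pi.single b 1) = 0)

/-! ### Auxiliary machinery -/

/-- Product of generators over a plain list. -/
def eP (l : List (Fin n)) : CliffordAlgebra Q :=
  (l.map (egen Q)).prod

lemma eP_nil : eP Q [] = 1 := rfl

lemma eP_cons (a : Fin n) (l : List (Fin n)) :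
    eP Q (a :: l) = egen Q a * eP Q l := by
  simp [eP]

lemma eProd_eq_eP (s : Finset (Fin n)) : eProd Q s = eP Q (s.sort (· ≤ ·)) := rfl

variable {Q}

lemma egen_sq (a : Fin n) :
    egen Q a * egen Q a = algebraMap ℝ _ (Q (Pi.single a 1)) :=
  ι_sq_scalar Q _

lemma egen_anticomm (hQ : DiagQ Q) {a b : Fin n} (h : a ≠ b) :
    egen Q a * egen Q b = -(egen Q b * egen Q a) := by
  have h1 := ι_mul_ι_add_swap (Q := Q) (Pi.single a (1:ℝ)) (Pi.single b 1)
  rw [hQ.2 a b h, map_zero] at h1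
  exact eq_neg_of_add_eq_zero_left h1

/-- helper: pass an anticommuting element across. -/
lemma anticomm_pass {A : Type*} [Ring A] {x y : A} (h : x * y = -(y * x)) (t : A) :
    x * (y * t) = -(y * (x * t)) := by
  rw [← mul_assoc, h, neg_mul, mul_assoc]

lemma comm_of_anticomm {A : Type*} [Ring A] {x y z : A}
    (h1 : x * y = -(y * x)) (h2 : x * z = -(z * x)) :
    x * (y * z) = (y * z) * x :=
  calc x * (y * z) = (x * y) * z := (mul_assoc _ _ _).symm
    _ = -((y * x) * z) := by rw [h1, neg_mul]
    _ = -(y * (x * z)) := by rw [mul_assoc]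
    _ = -(y * -(z * x)) := by rw [h2]
    _ = (y * z) * x := by rw [mul_neg, neg_neg, ← mul_assoc]

variable (Q) in
/-- The span of all the `eProd`s. -/
def Mspan : Submodule ℝ (CliffordAlgebra Q) :=
  Submodule.span ℝ (Set.range (eProd Q))

lemma eProd_mem_Mspan (s : Finset (Fin n)) : eProd Q s ∈ Mspan Q :=
  Submodule.subset_span ⟨s, rfl⟩

lemma eP_mem_Mspan {l : List (Fin n)} (hl : l.Pairwise (· < ·)) : eP Q l ∈ Mspan Q := by
  have h : (l.toFinset.sort (· ≤ ·)) = l :=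
    (List.toFinset_sort (· ≤ ·) (hl.imp ne_of_lt)).2 (hl.imp le_of_lt)
  have : eProd Q l.toFinset = eP Q l := by rw [eProd_eq_eP, h]
  exact this ▸ eProd_mem_Mspan _

/-- Key reduction lemma: multiplying a sorted product of generators by a generator yields
a scalar multiple of another sorted product. -/
lemma key_mul (hQ : DiagQ Q) :
    ∀ l : List (Fin n), l.Pairwise (· < ·) → ∀ a : Fin n,
      ∃ (c : ℝ) (l' : List (Fin n)), l'.Pairwise (· < ·) ∧
        (∀ x ∈ l', x = a ∨ x ∈ l) ∧ egen Q a * eP Q l = c • eP Q l'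
  | [], _, a => ⟨1, [a], List.pairwise_singleton _ a, by simp, by simp [eP]⟩
  | b :: r, hl, a => by
    rw [List.pairwise_cons] at hl
    obtain ⟨hbr, hr⟩ := hl
    rcases lt_trichotomy a b with hab | rfl | hba
    · refine ⟨1, a :: b :: r, ?_, fun x hx => (List.mem_cons.1 hx).imp id id,
        by simp [eP_cons]⟩
      rw [List.pairwise_cons]
      refine ⟨?_, List.pairwise_cons.2 ⟨hbr, hr⟩⟩
      intro x hx
      rcases List.mem_cons.1 hx with rfl | hx
      · exact hab
      · exact hab.trans (hbr x hx)
    · refine ⟨Q (Pi.single a 1), r, hr, fun x hx => Or.inr (List.mem_cons_of_mem _ hx), ?_⟩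
      rw [eP_cons, ← mul_assoc, egen_sq, Algebra.smul_def]
    · obtain ⟨c, l', hs, hsub, heq⟩ := key_mul hQ r hr a
      refine ⟨-c, b :: l', ?_, ?_, ?_⟩
      · exact List.pairwise_cons.2
          ⟨fun x hx => (hsub x hx).elim (fun h => h ▸ hba) (hbr x), hs⟩
      · intro x hx
        rcases List.mem_cons.1 hx with rfl | hx
        · exact Or.inr List.mem_cons_self
        · rcases hsub x hx with h | h
          · exact Or.inl h
          · exact Or.inr (List.mem_cons_of_mem _ h)
      · rw [eP_cons, ← mul_assoc, egen_anticomm hQ hba.ne', neg_mul, mul_assoc, heq,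
          mul_smul_comm, eP_cons, neg_smul]

lemma egen_mul_mem (hQ : DiagQ Q) (a : Fin n) {y : CliffordAlgebra Q} (hy : y ∈ Mspan Q) :
    egen Q a * y ∈ Mspan Q := by
  induction hy using Submodule.span_induction with
  | mem x hx =>
    obtain ⟨s, rfl⟩ := hx
    obtain ⟨c, l', hs, -, heq⟩ := key_mul hQ (s.sort (· ≤ ·)) ((Finset.sortedLT_sort s).pairwise) a
    rw [eProd_eq_eP, heq]
    exact Submodule.smul_mem _ _ (eP_mem_Mspan hs)
  | zero => simp
  | add u v _ _ hu hv => rw [mul_add]; exact add_mem hu hv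
  | smul r u _ hu => rw [mul_smul_comm]; exact Submodule.smul_mem _ _ hu

lemma eP_mul_mem (hQ : DiagQ Q) (l : List (Fin n)) {y : CliffordAlgebra Q}
    (hy : y ∈ Mspan Q) : eP Q l * y ∈ Mspan Q := by
  induction l with
  | nil => simpa [eP] using hy
  | cons a r ih => rw [eP_cons, mul_assoc]; exact egen_mul_mem hQ a ih

lemma Mspan_mul_mem (hQ : DiagQ Q) {x y : CliffordAlgebra Q}
    (hx : x ∈ Mspan Q) (hy : y ∈ Mspan Q) : x * y ∈ Mspan Q := by
  induction hx using Submodule.span_induction with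
  | mem u hu => obtain ⟨s, rfl⟩ := hu; rw [eProd_eq_eP]; exact eP_mul_mem hQ _ hy
  | zero => simp
  | add u v _ _ hu hv => rw [add_mul]; exact add_mem hu hv
  | smul r u _ hu => rw [smul_mul_assoc]; exact Submodule.smul_mem _ _ hu

lemma egen_mem_Mspan (a : Fin n) : egen Q a ∈ Mspan Q := by
  have : eP Q [a] = egen Q a := by simp [eP]
  exact this ▸ eP_mem_Mspan (List.pairwise_singleton _ a)

lemma one_mem_Mspan : (1 : CliffordAlgebra Q) ∈ Mspan Q :=
  eP_mem_Mspan (Q := Q) (l := []) List.Pairwise.nil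

lemma Mspan_eq_top (hQ : DiagQ Q) : Mspan Q = ⊤ := by
  rw [eq_top_iff]
  rintro x -
  induction x using CliffordAlgebra.induction with
  | algebraMap r =>
    rw [Algebra.algebraMap_eq_smul_one]
    exact Submodule.smul_mem _ _ one_mem_Mspan
  | ι v =>
    have hv : v = ∑ d, (Pi.single d (v d) : Fin n → ℝ) := (Finset.univ_sum_single v).symm
    rw [hv, map_sum]
    refine Submodule.sum_mem _ fun d _ => ?_
    have h1 : (Pi.single d (v d) : Fin n → ℝ) = v d • (Pi.single d (1:ℝ) : Fin n → ℝ) := by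
      rw [← Pi.single_smul, smul_eq_mul, mul_one]
    rw [h1, map_smul]
    exact Submodule.smul_mem _ _ (egen_mem_Mspan d)
  | mul x y hx hy => exact Mspan_mul_mem hQ hx hy
  | add x y hx hy => exact add_mem hx hy

/-- Clifford conjugation as a linear map. -/
def cconj : CliffordAlgebra Q →ₗ[ℝ] CliffordAlgebra Q :=
  involute.toLinearMap ∘ₗ reverse

lemma cconj_apply (x : CliffordAlgebra Q) : cconj x = involute (reverse x) := rfl

lemma cconj_mul (x y : CliffordAlgebra Q) : cconj (x * y) = cconj y * cconj x := by
  simp [cconj_apply, reverse.map_mul, map_mul]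

lemma cconj_one : cconj (1 : CliffordAlgebra Q) = 1 := by
  simp [cconj_apply]

lemma cconj_egen (a : Fin n) : cconj (egen Q a) = -(egen Q a) := by
  simp [cconj_apply, egen, reverse_ι, involute_ι]

lemma cconj_cconj (x : CliffordAlgebra Q) : cconj (cconj x) = x := by
  rw [cconj_apply, cconj_apply, reverse_involute, reverse_reverse, involute_involute]

/-- A product of three distinct generators covering all indices is central. -/
lemma eprod3_central (hQ : DiagQ Q) {a b c : Fin n}
    (hab : a ≠ b) (hac : a ≠ c) (hbc : b ≠ c)
    (hcover : ∀ d : Fin n, d = a ∨ d = b ∨ d = c) :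
    egen Q a * (egen Q b * egen Q c) ∈ Subalgebra.center ℝ (CliffordAlgebra Q) := by
  have sAB := egen_anticomm hQ hab
  have sAC := egen_anticomm hQ hac
  have sBC := egen_anticomm hQ hbc
  have sBA := egen_anticomm hQ hab.symm
  have sCA := egen_anticomm hQ hac.symm
  have sCB := egen_anticomm hQ hbc.symm
  have hA : egen Q a * (egen Q a * (egen Q b * egen Q c)) =
      (egen Q a * (egen Q b * egen Q c)) * egen Q a := by
    have c1 : Commute (egen Q a) (egen Q b * egen Q c) := comm_of_anticomm sAB sAC
    exact ((Commute.refl (egen Q a)).mul_right c1).eq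
  have hB : egen Q b * (egen Q a * (egen Q b * egen Q c)) =
      (egen Q a * (egen Q b * egen Q c)) * egen Q b :=
    calc egen Q b * (egen Q a * (egen Q b * egen Q c))
        = -(egen Q a * (egen Q b * (egen Q b * egen Q c))) := anticomm_pass sBA _
      _ = egen Q a * (egen Q b * -(egen Q b * egen Q c)) := by rw [mul_neg, mul_neg]
      _ = egen Q a * (egen Q b * (egen Q c * egen Q b)) := by rw [sCB]
      _ = egen Q a * ((egen Q b * egen Q c) * egen Q b) := by rw [mul_assoc]
      _ = (egen Q a * (egen Q b * egen Q c)) * egen Q b := (mul_assoc _ _ _).symm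
  have hC : egen Q c * (egen Q a * (egen Q b * egen Q c)) =
      (egen Q a * (egen Q b * egen Q c)) * egen Q c :=
    calc egen Q c * (egen Q a * (egen Q b * egen Q c))
        = -(egen Q a * (egen Q c * (egen Q b * egen Q c))) := anticomm_pass sCA _
      _ = -(egen Q a * -(egen Q b * (egen Q c * egen Q c))) := by rw [anticomm_pass sCB]
      _ = egen Q a * (egen Q b * (egen Q c * egen Q c)) := by rw [mul_neg, neg_neg]
      _ = egen Q a * ((egen Q b * egen Q c) * egen Q c) := by rw [mul_assoc]
      _ = (egen Q a * (egen Q b * egen Q c)) * egen Q c := (mul_assoc _ _ _).symm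
  have hgen : ∀ d : Fin n,
      egen Q d * (egen Q a * (egen Q b * egen Q c)) =
        (egen Q a * (egen Q b * egen Q c)) * egen Q d := by
    intro d
    rcases hcover d with rfl | rfl | rfl
    exacts [hA, hB, hC]
  rw [Subalgebra.mem_center_iff]
  intro g
  induction g using CliffordAlgebra.induction with
  | algebraMap r => exact Algebra.commutes r _
  | ι v =>
    have hv : v = ∑ d, (Pi.single d (v d) : Fin n → ℝ) := (Finset.univ_sum_single v).symm
    rw [hv, map_sum, Finset.sum_mul, Finset.mul_sum]
    refine Finset.sum_congr rfl fun d _ => ?_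
    have h1 : (Pi.single d (v d) : Fin n → ℝ) = v d • (Pi.single d (1:ℝ) : Fin n → ℝ) := by
      rw [← Pi.single_smul, smul_eq_mul, mul_one]
    rw [h1, map_smul, smul_mul_assoc, mul_smul_comm]
    exact congrArg (v d • ·) (hgen d)
  | mul x y hx hy => rw [mul_assoc, hy, ← mul_assoc, hx, mul_assoc]
  | add x y hx hy => rw [add_mul, mul_add, hx, hy]

lemma add_cconj_central (hQ : DiagQ Q) (hn : n ≤ 3) (x : CliffordAlgebra Q) :
    x + cconj x ∈ Subalgebra.center ℝ (CliffordAlgebra Q) := by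
  have hx : x ∈ Mspan Q := (Mspan_eq_top hQ).symm ▸ Submodule.mem_top
  induction hx using Submodule.span_induction with
  | mem u hu =>
    obtain ⟨s, rfl⟩ := hu
    have hcard : s.card ≤ 3 := le_trans (le_trans s.card_le_univ (by simp)) hn
    have hlen : (s.sort (· ≤ ·)).length ≤ 3 := by
      rw [Finset.length_sort]; exact hcard
    have hsorted := (Finset.sortedLT_sort s).pairwise
    have hmemsort : ∀ d, d ∈ s ↔ d ∈ s.sort (· ≤ ·) := fun d => (Finset.mem_sort _).symm
    rw [eProd_eq_eP]
    rcases hls : s.sort (· ≤ ·) with _ | ⟨a, _ | ⟨b, _ | ⟨c, _ | ⟨d, r⟩⟩⟩⟩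
    · -- empty
      rw [eP_nil, cconj_one]
      exact add_mem (one_mem _) (one_mem _)
    · -- [a]
      have : eP Q [a] = egen Q a := by simp [eP]
      rw [this, cconj_egen, add_neg_cancel]
      exact zero_mem _
    · -- [a, b]
      rw [hls] at hsorted
      have hab : a ≠ b := (List.rel_of_pairwise_cons hsorted (by simp : b ∈ _)).ne
      have hPe : eP Q [a, b] = egen Q a * egen Q b := by simp [eP]
      rw [hPe, cconj_mul, cconj_egen, cconj_egen, neg_mul_neg, egen_anticomm hQ hab.symm,
        add_neg_cancel]
      exact zero_mem _
    · -- [a, b, c]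
      rw [hls] at hsorted
      have hab : a < b := List.rel_of_pairwise_cons hsorted (by simp : b ∈ _)
      have hac : a < c := List.rel_of_pairwise_cons hsorted (by simp : c ∈ _)
      have hbc : b < c := List.rel_of_pairwise_cons hsorted.of_cons (by simp : c ∈ _)
      have hPe : eP Q [a, b, c] = egen Q a * (egen Q b * egen Q c) := by
        simp [eP, mul_assoc]
      have hcover : ∀ d : Fin n, d = a ∨ d = b ∨ d = c := by
        intro d
        have hsc : s.card = 3 := by
          rw [← Finset.length_sort (· ≤ ·), hls]; rfl
        have hn3 : n = 3 := le_antisymm hn (by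
          have := s.card_le_univ
          simp only [Finset.card_univ, Fintype.card_fin] at this
          omega)
        have hsuniv : s = Finset.univ := Finset.eq_univ_of_card s (by
          simp [hsc, hn3])
        have : d ∈ s := hsuniv ▸ Finset.mem_univ d
        rw [hmemsort, hls] at this
        simpa using this
      have hcc : cconj (eP Q [a, b, c]) = eP Q [a, b, c] := by
        rw [hPe]
        calc cconj (egen Q a * (egen Q b * egen Q c))
            = cconj (egen Q b * egen Q c) * cconj (egen Q a) := cconj_mul _ _
          _ = (cconj (egen Q c) * cconj (egen Q b)) * cconj (egen Q a) := by rw [cconj_mul]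
          _ = (-(egen Q c) * -(egen Q b)) * -(egen Q a) := by
              rw [cconj_egen, cconj_egen, cconj_egen]
          _ = -((egen Q c * egen Q b) * egen Q a) := by rw [neg_mul_neg, mul_neg]
          _ = -(-(egen Q b * egen Q c) * egen Q a) := by rw [egen_anticomm hQ hbc.ne']
          _ = (egen Q b * egen Q c) * egen Q a := by rw [neg_mul, neg_neg]
          _ = egen Q b * (egen Q c * egen Q a) := mul_assoc _ _ _
          _ = egen Q b * -(egen Q a * egen Q c) := by rw [egen_anticomm hQ hac.ne']
          _ = -(egen Q b * (egen Q a * egen Q c)) := by rw [mul_neg]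
          _ = -(-(egen Q a * (egen Q b * egen Q c))) := by
              rw [anticomm_pass (egen_anticomm hQ hab.ne') (egen Q c)]
          _ = egen Q a * (egen Q b * egen Q c) := neg_neg _
      rw [hcc]
      have := eprod3_central hQ hab.ne hac.ne hbc.ne hcover
      rw [hPe]
      exact add_mem this this
    · -- too long
      exfalso
      rw [hls] at hlen
      simp only [List.length_cons] at hlen
      omega
  | zero => simpa using zero_mem _
  | add u v _ _ hu hv =>
    have : (u + v) + cconj (u + v) = (u + cconj u) + (v + cconj v) := by
      rw [map_add]; abel
    rw [this]; exact add_mem hu hv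
  | smul r u _ hu =>
    have : (r • u) + cconj (r • u) = r • (u + cconj u) := by
      rw [map_smul, smul_add]
    rw [this]
    exact Submodule.smul_mem (Subalgebra.toSubmodule (Subalgebra.center ℝ _)) r hu

lemma fixed_central (hQ : DiagQ Q) (hn : n ≤ 3) {x : CliffordAlgebra Q}
    (hx : cconj x = x) : x ∈ Subalgebra.center ℝ (CliffordAlgebra Q) := by
  have h := add_cconj_central hQ hn x
  rw [hx] at h
  have hx2 : x = (2⁻¹ : ℝ) • (x + x) := by
    rw [← two_smul ℝ x, smul_smul]
    norm_num
  rw [hx2]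
  exact Submodule.smul_mem (Subalgebra.toSubmodule (Subalgebra.center ℝ _)) _ h

/-- For `n ≤ 3` the group `B` is all of `C^×`: for every invertible `T`,
`involute(reverse(T)) * T` is an invertible central element. -/
theorem stmt11 (hQ : DiagQ Q) (hn : n ≤ 3) (T : (CliffordAlgebra Q)ˣ) :
    involute (reverse (Q := Q) (↑T : CliffordAlgebra Q)) * ↑T ∈
        Subalgebra.center ℝ (CliffordAlgebra Q) ∧
      IsUnit (involute (reverse (Q := Q) (↑T : CliffordAlgebra Q)) * ↑T) := by
  constructor
  · apply fixed_central hQ hn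
    rw [← cconj_apply, cconj_mul, cconj_cconj]
  · have hrev : IsUnit (reverse (Q := Q) (↑T : CliffordAlgebra Q)) := by
      refine ⟨⟨reverse (↑T : CliffordAlgebra Q), reverse (↑T⁻¹ : CliffordAlgebra Q), ?_, ?_⟩, rfl⟩
      · rw [← reverse.map_mul, ← Units.val_mul, inv_mul_cancel, Units.val_one,
          reverse.map_one]
      · rw [← reverse.map_mul, ← Units.val_mul, mul_inv_cancel, Units.val_one,
          reverse.map_one]
    exact (hrev.map involute).mul T.isUnit
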